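/- Let Σ ⊂ ℤ³ be the six-element set of unit step vectors {e₁, −e₁, e₂, −e₂, e₃, −e₃}. For all integers n and k with n ≥ k + 1 ≥ 4, there exists a universal cycle for the set P_{n,k} of three-dimensional lattice paths of length n ending within ℓ¹-distance k of the origin, i.e., words w : Fin n → Σ with ‖∑_{i} w(i)‖₁ ≤ k. -/

import Mathlib

/- The finite set of words of length `k` over a finite alphabet `A`
satisfying a predicate `P`. -/
open Classical in
noncomputable def wordsOf {A : Type*} [Fintype A] {k : ℕ} (P : (Fin k → A) → Prop) :
    Finset (Fin k → A) :=
  Finset.univ.filter P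

/-- A nonempty finite set `S` of words of length `k` over `A` admits a universal cycle:
a function `c : ZMod S.card → A` such that `i ↦ (fun j => c (i + j))` is a bijection
from `ZMod S.card` onto `S`. -/
def HasUCycle {A : Type*} {k : ℕ} (S : Finset (Fin k → A)) : Prop :=
  ∃ c : ZMod S.card → A,
    Set.BijOn (fun i : ZMod S.card => fun j : Fin k => c (i + (j.val : ZMod S.card)))
      Set.univ ↑S

/-- The six unit step vectors `±e₁, ±e₂, ±e₃` in `ℤ³` (encoded as `ℤ × ℤ × ℤ`). -/
def stepSet3 : Finset (ℤ × ℤ × ℤ) :=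
  {(1, 0, 0), (-1, 0, 0), (0, 1, 0), (0, -1, 0), (0, 0, 1), (0, 0, -1)}

/-- The ℓ¹ norm on `ℤ³`. -/
def l1 (v : ℤ × ℤ × ℤ) : ℤ := |v.1| + |v.2.1| + |v.2.2|

set_option linter.unusedSectionVars false
set_option linter.unusedVariables false
set_option maxHeartbeats 1000000

namespace UCycleProof

variable {A : Type*} [DecidableEq A] {n : ℕ}

def hd (w : Fin n → A) : Fin (n-1) → A := fun j => w ⟨j.val, by omega⟩
def tl (w : Fin n → A) : Fin (n-1) → A := fun j => w ⟨j.val + 1, by omega⟩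
def stp (w w' : Fin n → A) : Prop := tl w = hd w'
def IsTrail (R : Finset (Fin n → A)) (M : List (Fin n → A)) : Prop :=
  M.Nodup ∧ (∀ w ∈ M, w ∈ R) ∧ M.Chain' stp
def IsClosed (M : List (Fin n → A)) : Prop :=
  ∀ h : M ≠ [], stp (M.getLast h) (M.head h)
noncomputable def outC (M : List (Fin n → A)) (v : Fin (n-1) → A) : ℕ :=
  (M.filter (fun w => hd w = v)).length
noncomputable def inC (M : List (Fin n → A)) (v : Fin (n-1) → A) : ℕ :=
  (M.filter (fun w => tl w = v)).length

-- from test1.lean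
lemma map_tl_of_chain' : ∀ (M : List (Fin n → A)) (hM : M ≠ []), M.Chain' stp →
    M.map tl = (M.tail.map hd) ++ [tl (M.getLast hM)]
  | [], hM, _ => absurd rfl hM
  | [a], _, _ => rfl
  | a :: b :: t, _, hC => by
      have hab : stp a b := hC.rel_head
      have ih := map_tl_of_chain' (b :: t) (by simp) hC.tail
      simp only [List.map_cons, List.tail_cons] at ih ⊢
      rw [ih]
      simp [List.getLast_cons, hab, stp] at *
      exact hab

lemma count_open (M : List (Fin n → A)) (hM : M ≠ []) (hC : M.Chain' stp)
    (v : Fin (n-1) → A) :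
    inC M v + (if hd (M.head hM) = v then 1 else 0)
      = outC M v + (if tl (M.getLast hM) = v then 1 else 0) := by
  classical
  have h1 : inC M v = ((M.map tl).filter (fun u => u = v)).length := by
    simp [inC, List.filter_map, Function.comp_def]
  have h2 : outC M v = ((M.map hd).filter (fun u => u = v)).length := by
    simp [outC, List.filter_map, Function.comp_def]
  have h3 : M.map hd = hd (M.head hM) :: M.tail.map hd := by
    cases M with
    | nil => exact absurd rfl hM
    | cons a t => rfl
  rw [h1, h2, map_tl_of_chain' M hM hC, h3]
  simp [List.filter_append]
  by_cases e1 : tl (M.getLast hM) = v <;> by_cases e2 : hd (M.head hM) = v <;>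
    simp [e1, e2] <;> omega

lemma count_closed (M : List (Fin n → A)) (hC : M.Chain' stp) (hcl : IsClosed M)
    (v : Fin (n-1) → A) : inC M v = outC M v := by
  cases Decidable.em (M = []) with
  | inl h => subst h; rfl
  | inr hM =>
    have := count_open M hM hC v
    have hcl' := hcl hM
    rw [stp] at hcl'
    rw [hcl'] at this
    omega

lemma outC_le (R : Finset (Fin n → A)) (M : List (Fin n → A)) (h : IsTrail R M)
    (v : Fin (n-1) → A) : outC M v ≤ (R.filter (fun w => hd w = v)).card := by
  classical
  have hnd : (M.filter (fun w => hd w = v)).Nodup := h.1.filter _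
  have : (M.filter (fun w => hd w = v)).toFinset ⊆ R.filter (fun w => hd w = v) := by
    intro w hw
    simp only [List.mem_toFinset, List.mem_filter, decide_eq_true_eq] at hw
    exact Finset.mem_filter.2 ⟨h.2.1 w hw.1, hw.2⟩
  calc (M.filter (fun w => hd w = v)).length = (M.filter (fun w => hd w = v)).toFinset.card :=
        (List.toFinset_card_of_nodup hnd).symm
    _ ≤ _ := Finset.card_le_card this

lemma inC_le (R : Finset (Fin n → A)) (M : List (Fin n → A)) (h : IsTrail R M)
    (v : Fin (n-1) → A) : inC M v ≤ (R.filter (fun w => tl w = v)).card := by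
  classical
  have hnd : (M.filter (fun w => tl w = v)).Nodup := h.1.filter _
  have : (M.filter (fun w => tl w = v)).toFinset ⊆ R.filter (fun w => tl w = v) := by
    intro w hw
    simp only [List.mem_toFinset, List.mem_filter, decide_eq_true_eq] at hw
    exact Finset.mem_filter.2 ⟨h.2.1 w hw.1, hw.2⟩
  calc (M.filter (fun w => tl w = v)).length = (M.filter (fun w => tl w = v)).toFinset.card :=
        (List.toFinset_card_of_nodup hnd).symm
    _ ≤ _ := Finset.card_le_card this

-- from test2.lean
lemma exists_ext (R : Finset (Fin n → A))
    (hbal : ∀ v, (R.filter (fun w => hd w = v)).card = (R.filter (fun w => tl w = v)).card)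
    (v₀ : Fin n → A → True := by trivial) : True := trivial

lemma extend_step (R : Finset (Fin n → A))
    (hbal : ∀ v, (R.filter (fun w => hd w = v)).card = (R.filter (fun w => tl w = v)).card)
    (v₀ : Fin (n-1) → A) (M : List (Fin n → A)) (hM : M ≠ [])
    (hT : IsTrail R M) (hhd : hd (M.head hM) = v₀)
    (hne : tl (M.getLast hM) ≠ v₀) :
    ∃ e ∈ R, e ∉ M ∧ hd e = tl (M.getLast hM) := by
  classical
  set u := tl (M.getLast hM) with hu
  have hco := count_open M hM hT.2.2 u
  rw [if_pos rfl, if_neg (by rw [hhd]; exact fun h => hne h.symm)] at hco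
  have h1 : outC M u + 1 ≤ (R.filter (fun w => tl w = u)).card := by
    have := inC_le R M hT u; omega
  have h2 : outC M u < (R.filter (fun w => hd w = u)).card := by
    rw [hbal u]; omega
  by_contra hcon
  push_neg at hcon
  have hsub : R.filter (fun w => hd w = u) ⊆ (M.filter (fun w => hd w = u)).toFinset := by
    intro e he
    rw [Finset.mem_filter] at he
    simp only [List.mem_toFinset, List.mem_filter, decide_eq_true_eq]
    refine ⟨by_contra fun hnot => hcon e he.1 hnot he.2, he.2⟩
  have := Finset.card_le_card hsub
  rw [List.toFinset_card_of_nodup (hT.1.filter _)] at this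
  unfold outC at h2
  omega

lemma extend_trail (R : Finset (Fin n → A))
    (hbal : ∀ v, (R.filter (fun w => hd w = v)).card = (R.filter (fun w => tl w = v)).card)
    (v₀ : Fin (n-1) → A) :
    ∀ M, IsTrail R M → ∀ hM : M ≠ [], hd (M.head hM) = v₀ →
    ∃ M', IsTrail R M' ∧ ∃ hM' : M' ≠ [], hd (M'.head hM') = v₀ ∧
      tl (M'.getLast hM') = v₀ ∧ ∀ w ∈ M, w ∈ M' := by
  classical
  have key : ∀ d : ℕ, ∀ M, IsTrail R M → R.card - M.length ≤ d → ∀ hM : M ≠ [],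
      hd (M.head hM) = v₀ →
      ∃ M', IsTrail R M' ∧ ∃ hM' : M' ≠ [], hd (M'.head hM') = v₀ ∧
        tl (M'.getLast hM') = v₀ ∧ ∀ w ∈ M, w ∈ M' := by
    intro d
    induction d with
    | zero =>
      intro M hT hd0 hM hhd
      by_cases hcl : tl (M.getLast hM) = v₀
      · exact ⟨M, hT, hM, hhd, hcl, fun w hw => hw⟩
      · exfalso
        obtain ⟨e, heR, heM, _⟩ := extend_step R hbal v₀ M hM hT hhd hcl
        have hlen : M.length ≤ R.card := by
          have h1 : M.toFinset ⊆ R := fun w hw => hT.2.1 w (List.mem_toFinset.1 hw)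
          have := Finset.card_le_card h1
          rwa [List.toFinset_card_of_nodup hT.1] at this
        have hlt : M.length < R.card := by
          have h1 : insert e M.toFinset ⊆ R := by
            intro w hw
            rcases Finset.mem_insert.1 hw with h | h
            · subst h; exact heR
            · exact hT.2.1 w (List.mem_toFinset.1 h)
          have := Finset.card_le_card h1
          rw [Finset.card_insert_of_notMem (by simpa using heM),
            List.toFinset_card_of_nodup hT.1] at this
          omega
        omega
    | succ d ih =>
      intro M hT hd0 hM hhd
      by_cases hcl : tl (M.getLast hM) = v₀
      · exact ⟨M, hT, hM, hhd, hcl, fun w hw => hw⟩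
      · obtain ⟨e, heR, heM, hehd⟩ := extend_step R hbal v₀ M hM hT hhd hcl
        have hT' : IsTrail R (M ++ [e]) := by
          refine ⟨?_, ?_, ?_⟩
          · rw [List.nodup_append]
            refine ⟨hT.1, List.nodup_singleton e, ?_⟩
            intro a ha b hb hab
            rw [List.mem_singleton] at hb
            subst hb; exact heM (hab ▸ ha)
          · intro w hw
            rcases List.mem_append.1 hw with h | h
            · exact hT.2.1 w h
            · simp at h; subst h; exact heR
          · rw [List.Chain', List.isChain_append]
            refine ⟨hT.2.2, List.isChain_singleton e, ?_⟩
            intro x hx y hy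
            simp only [List.head?_cons, Option.mem_def, Option.some.injEq] at hy
            subst hy
            rw [List.getLast?_eq_getLast hM, Option.mem_def, Option.some.injEq] at hx
            subst hx
            exact hehd.symm
        have hne' : M ++ [e] ≠ [] := by simp
        have hhd' : hd ((M ++ [e]).head hne') = v₀ := by
          rwa [List.head_append_of_ne_nil hM]
        have hdec : R.card - (M ++ [e]).length ≤ d := by
          have h1 : insert e M.toFinset ⊆ R := by
            intro w hw
            rcases Finset.mem_insert.1 hw with h | h
            · subst h; exact heR
            · exact hT.2.1 w (List.mem_toFinset.1 h)
          have := Finset.card_le_card h1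
          rw [Finset.card_insert_of_notMem (by simpa using heM),
            List.toFinset_card_of_nodup hT.1] at this
          simp only [List.length_append, List.length_singleton]
          omega
        obtain ⟨M', h1, h2, h3, h4, h5⟩ := ih (M ++ [e]) hT' hdec hne' hhd'
        exact ⟨M', h1, h2, h3, h4, fun w hw => h5 w (List.mem_append.2 (Or.inl hw))⟩
  intro M hT hM hhd
  exact key (R.card - M.length) M hT le_rfl hM hhd

-- from test3.lean
lemma chain'_link {l₁ l₂ : List (Fin n → A)} (h₁ : l₁ ≠ []) (h₂ : l₂ ≠ [])
    (c₁ : l₁.Chain' stp) (c₂ : l₂.Chain' stp) (link : stp (l₁.getLast h₁) (l₂.head h₂)) :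
    (l₁ ++ l₂).Chain' stp := by
  rw [List.Chain', List.isChain_append]
  refine ⟨c₁, c₂, ?_⟩
  intro x hx y hy
  rw [List.getLast?_eq_getLast h₁, Option.mem_def, Option.some.injEq] at hx
  rw [List.head?_eq_head h₂, Option.mem_def, Option.some.injEq] at hy
  subst hx; subst hy; exact link

lemma chain'_unlink {l₁ l₂ : List (Fin n → A)} (h₁ : l₁ ≠ []) (h₂ : l₂ ≠ [])
    (c : (l₁ ++ l₂).Chain' stp) :
    l₁.Chain' stp ∧ l₂.Chain' stp ∧ stp (l₁.getLast h₁) (l₂.head h₂) := by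
  rw [List.Chain', List.isChain_append] at c
  refine ⟨c.1, c.2.1, c.2.2 _ ?_ _ ?_⟩
  · rw [List.getLast?_eq_getLast h₁]; rfl
  · rw [List.head?_eq_head h₂]; rfl

lemma closed_rotate (R : Finset (Fin n → A)) (l₁ l₂ : List (Fin n → A))
    (h : IsTrail R (l₁ ++ l₂)) (hcl : IsClosed (l₁ ++ l₂)) :
    IsTrail R (l₂ ++ l₁) ∧ IsClosed (l₂ ++ l₁) := by
  have hperm : (l₁ ++ l₂).Perm (l₂ ++ l₁) := List.perm_append_comm
  rcases eq_or_ne l₁ [] with rfl | h₁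
  · rw [List.append_nil]
    simp only [List.nil_append] at h hcl
    exact ⟨h, hcl⟩
  rcases eq_or_ne l₂ [] with rfl | h₂
  · rw [List.append_nil] at h hcl
    simp only [List.nil_append]
    exact ⟨h, hcl⟩
  have hne : l₁ ++ l₂ ≠ [] := by simp [h₁]
  obtain ⟨c₁, c₂, link⟩ := chain'_unlink h₁ h₂ h.2.2
  have hlast : (l₁ ++ l₂).getLast hne = l₂.getLast h₂ := List.getLast_append_of_ne_nil _ h₂
  have hhead : (l₁ ++ l₂).head hne = l₁.head h₁ := List.head_append_of_ne_nil h₁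
  have hcl' : stp (l₂.getLast h₂) (l₁.head h₁) := by
    have := hcl hne; rwa [hlast, hhead] at this
  refine ⟨⟨hperm.nodup h.1, fun w hw => h.2.1 w (hperm.mem_iff.2 hw), ?_⟩, ?_⟩
  · exact chain'_link h₂ h₁ c₂ c₁ hcl'
  · intro hne'
    rw [List.getLast_append_of_ne_nil _ h₁, List.head_append_of_ne_nil h₂]
    exact link

lemma splice (R : Finset (Fin n → A)) (L M : List (Fin n → A))
    (hL : IsTrail R L) (hLcl : IsClosed L) (hLne : L ≠ [])
    (hM : IsTrail R M) (hMcl : IsClosed M) (hMne : M ≠ [])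
    (hdisj : ∀ w ∈ M, w ∉ L)
    (hj : tl (L.getLast hLne) = hd (M.head hMne)) :
    IsTrail R (L ++ M) ∧ IsClosed (L ++ M) := by
  refine ⟨⟨?_, ?_, ?_⟩, ?_⟩
  · rw [List.nodup_append]
    exact ⟨hL.1, hM.1, fun a ha b hb hab => hdisj b hb (hab ▸ ha)⟩
  · intro w hw
    rcases List.mem_append.1 hw with h | h
    · exact hL.2.1 w h
    · exact hM.2.1 w h
  · exact chain'_link hLne hMne hL.2.2 hM.2.2 hj
  · intro hne
    rw [List.getLast_append_of_ne_nil _ hMne, List.head_append_of_ne_nil hLne]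
    have h1 := hMcl hMne
    rw [stp] at h1 ⊢
    rw [h1, ← hj]
    exact hLcl hLne

lemma crossing {α : Type*} {r : α → α → Prop} {Q : α → Prop} {a b : α}
    (h : Relation.ReflTransGen r a b) (ha : Q a) (hb : ¬ Q b) :
    ∃ x y, r x y ∧ Q x ∧ ¬ Q y ∧ Relation.ReflTransGen r a x := by
  classical
  induction h with
  | refl => exact absurd ha hb
  | tail hab hbc ih =>
    rename_i c d
    by_cases hc : Q c
    · exact ⟨c, d, hbc, hc, hb, hab⟩
    · obtain ⟨x, y, h1, h2, h3, h4⟩ := ih hc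
      exact ⟨x, y, h1, h2, h3, h4⟩

-- from test4.lean
lemma mem_S_of_reach {S : Finset (Fin n → A)} {a x : Fin n → A} (ha : a ∈ S)
    (h : Relation.ReflTransGen (fun a b => stp a b ∧ b ∈ S) a x) : x ∈ S := by
  induction h with
  | refl => exact ha
  | tail _ h2 _ => exact h2.2

/-- balance of the complement of a closed trail -/

lemma bal_sdiff (S : Finset (Fin n → A))
    (hbal : ∀ v, (S.filter (fun w => hd w = v)).card = (S.filter (fun w => tl w = v)).card)
    (L : List (Fin n → A)) (hL : IsTrail S L) (hLcl : IsClosed L) (v : Fin (n-1) → A) :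
    ((S \ L.toFinset).filter (fun w => hd w = v)).card
      = ((S \ L.toFinset).filter (fun w => tl w = v)).card := by
  classical
  have key : ∀ p : (Fin n → A) → Prop, ∀ _inst : DecidablePred p,
      ((S \ L.toFinset).filter p).card = (S.filter p).card - (L.filter p).length := by
    intro p _
    have h1 : (S \ L.toFinset).filter p = S.filter p \ L.toFinset.filter p := by
      ext w
      simp only [Finset.mem_filter, Finset.mem_sdiff]
      tauto
    have h2 : L.toFinset.filter p ⊆ S.filter p := by
      intro w hw
      simp only [Finset.mem_filter, List.mem_toFinset] at hw
      exact Finset.mem_filter.2 ⟨hL.2.1 w hw.1, hw.2⟩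
    have h3 : (L.toFinset.filter p).card = (L.filter p).length := by
      have e1 : (L.filter p).toFinset = L.toFinset.filter p := by
        ext w
        simp [List.mem_filter]
      rw [← e1]
      exact List.toFinset_card_of_nodup (hL.1.filter _)
    rw [h1, Finset.card_sdiff_of_subset h2, h3]
  rw [key (fun w => hd w = v) inferInstance, key (fun w => tl w = v) inferInstance, hbal v]
  have hc := count_closed L hL.2.2 hLcl v
  unfold inC outC at hc
  rw [hc]

theorem euler (S : Finset (Fin n → A)) (hS : S.Nonempty)
    (hbal : ∀ v, (S.filter (fun w => hd w = v)).card = (S.filter (fun w => tl w = v)).card)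
    (w₀ : Fin n → A) (hw₀ : w₀ ∈ S)
    (hconn : ∀ w ∈ S, Relation.ReflTransGen (fun a b => stp a b ∧ b ∈ S) w w₀) :
    ∃ L : List (Fin n → A), L ≠ [] ∧ L.Nodup ∧ L.toFinset = S ∧
      L.Chain' stp ∧ IsClosed L := by
  classical
  -- initial closed trail
  obtain ⟨e₀, he₀⟩ := hS
  obtain ⟨M₀, hM₀T, hM₀ne, hM₀hd, hM₀tl, _⟩ :=
    extend_trail S hbal (hd e₀) [e₀]
      ⟨List.nodup_singleton e₀, by simpa using he₀, List.isChain_singleton e₀⟩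
      (by simp) rfl
  have hM₀cl : IsClosed M₀ := by
    intro h
    rw [stp, hM₀tl, hM₀hd]
  -- growth step
  have grow : ∀ L : List (Fin n → A), IsTrail S L → IsClosed L → L ≠ [] →
      L.toFinset ≠ S → ∃ L' : List (Fin n → A), IsTrail S L' ∧ IsClosed L' ∧ L' ≠ [] ∧
        L.length < L'.length := by
    intro L hLT hLcl hLne hLnS
    set R := S \ L.toFinset with hR
    have hRbal := bal_sdiff S hbal L hLT hLcl
    have hRsub : R ⊆ S := Finset.sdiff_subset
    obtain ⟨e, heS, heL⟩ : ∃ e ∈ S, e ∉ L.toFinset := by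
      by_contra hcon
      push_neg at hcon
      apply hLnS
      apply Finset.Subset.antisymm _ hcon
      intro w hw
      exact hLT.2.1 w (List.mem_toFinset.1 hw)
    have heR : e ∈ R := Finset.mem_sdiff.2 ⟨heS, heL⟩
    -- find a rotation L₂ of L and an available edge f ∈ R with hd f = tl (getLast L₂)
    have hjunction : ∃ L₂ : List (Fin n → A), IsTrail S L₂ ∧ IsClosed L₂ ∧
        L₂.length = L.length ∧ L₂.toFinset = L.toFinset ∧ ∃ hne₂ : L₂ ≠ [],
        ∃ f ∈ R, hd f = tl (L₂.getLast hne₂) := by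
      by_cases hw₀L : w₀ ∈ L.toFinset
      · -- cross from outside into L
        obtain ⟨x, y, ⟨hxy, hyS⟩, hxQ, hyQ, hreach⟩ :=
          crossing (Q := fun z => z ∉ L.toFinset) (hconn e heS) heL (by simpa using hw₀L)
        have hxS : x ∈ S := mem_S_of_reach heS hreach
        have hxR : x ∈ R := Finset.mem_sdiff.2 ⟨hxS, hxQ⟩
        have hyL : y ∈ L := List.mem_toFinset.1 (not_not.1 hyQ)
        obtain ⟨l₁, l₂, rfl⟩ := List.append_of_mem hyL
        obtain ⟨hT₂, hcl₂⟩ := closed_rotate S l₁ (y :: l₂) hLT hLcl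
        have hne₂ : (y :: l₂) ++ l₁ ≠ [] := by simp
        have hhead₂ : ((y :: l₂) ++ l₁).head hne₂ = y := by
          rw [List.head_append_of_ne_nil (by simp)]
          rfl
        have hv : tl (((y :: l₂) ++ l₁).getLast hne₂) = hd y := by
          have := hcl₂ hne₂
          rw [stp, hhead₂] at this
          exact this
        -- in_R (hd y) ≥ 1 via x, so out_R (hd y) ≥ 1 via balance
        have hin : 0 < (R.filter (fun w => tl w = hd y)).card := by
          refine Finset.card_pos.2 ⟨x, Finset.mem_filter.2 ⟨hxR, hxy⟩⟩
        rw [← hRbal] at hin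
        obtain ⟨f, hf⟩ := Finset.card_pos.1 hin
        rw [Finset.mem_filter] at hf
        refine ⟨(y :: l₂) ++ l₁, hT₂, hcl₂, by simp [List.length_append]; omega,
          by ext a; simp [List.mem_append, or_comm, or_assoc, or_left_comm], hne₂, f, hf.1, ?_⟩
        rw [hv, hf.2]
      · -- cross from L to outside
        have hgL : L.head hLne ∈ L := List.head_mem hLne
        have hgS : L.head hLne ∈ S := hLT.2.1 _ hgL
        obtain ⟨x, y, ⟨hxy, hyS⟩, hxQ, hyQ, _⟩ :=
          crossing (Q := fun z => z ∈ L.toFinset) (hconn _ hgS)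
            (List.mem_toFinset.2 hgL) hw₀L
        have hyR : y ∈ R := Finset.mem_sdiff.2 ⟨hyS, hyQ⟩
        have hxL : x ∈ L := List.mem_toFinset.1 hxQ
        obtain ⟨l₁, l₂, hsplit⟩ := List.append_of_mem hxL
        have hsplit' : L = (l₁ ++ [x]) ++ l₂ := by simp [hsplit]
        rw [hsplit'] at hLT hLcl
        obtain ⟨hT₂, hcl₂⟩ := closed_rotate S (l₁ ++ [x]) l₂ hLT hLcl
        have hne₂ : l₂ ++ (l₁ ++ [x]) ≠ [] := by simp
        have hlast₂ : (l₂ ++ (l₁ ++ [x])).getLast hne₂ = x := by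
          rw [List.getLast_append_of_ne_nil _ (by simp)]
          exact List.getLast_append _
        refine ⟨l₂ ++ (l₁ ++ [x]), hT₂, hcl₂, by simp [hsplit']; omega, ?_, hne₂, y, hyR, ?_⟩
        · rw [hsplit']
          ext a
          simp [List.mem_append, or_comm, or_assoc, or_left_comm]
        · rw [hlast₂, ← hxy]
      -- splice a closed trail of unused edges at the junction
    obtain ⟨L₂, hT₂, hcl₂, hlen₂, hfin₂, hne₂, f, hfR, hfhd⟩ := hjunction
    have hRbal' : ∀ v, (R.filter (fun w => hd w = v)).card
        = (R.filter (fun w => tl w = v)).card := hRbal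
    obtain ⟨M, hMT, hMne, hMhd, hMtl, hfM⟩ :=
      extend_trail R hRbal' (tl (L₂.getLast hne₂)) [f]
        ⟨List.nodup_singleton f, by simpa using hfR, List.isChain_singleton f⟩
        (by simp) (by simpa using hfhd)
    have hMcl : IsClosed M := by
      intro h
      rw [stp, hMtl, hMhd]
    have hMS : IsTrail S M := ⟨hMT.1, fun w hw => hRsub (hMT.2.1 w hw), hMT.2.2⟩
    have hdisj : ∀ w ∈ M, w ∉ L₂ := by
      intro w hw hwL₂
      have : w ∈ R := hMT.2.1 w hw
      rw [Finset.mem_sdiff, ← hfin₂] at this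
      exact this.2 (List.mem_toFinset.2 hwL₂)
    obtain ⟨hT', hcl'⟩ := splice S L₂ M hT₂ hcl₂ hne₂ hMS hMcl hMne hdisj
      (by rw [hMhd])
    refine ⟨L₂ ++ M, hT', hcl', by simp [hne₂], ?_⟩
    have : 0 < M.length := List.length_pos_iff.2 hMne
    simp only [List.length_append]
    omega
  -- main loop
  have main : ∀ d : ℕ, ∀ L : List (Fin n → A), IsTrail S L → IsClosed L → L ≠ [] →
      S.card - L.length ≤ d →
      ∃ L' : List (Fin n → A), L' ≠ [] ∧ L'.Nodup ∧ L'.toFinset = S ∧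
        L'.Chain' stp ∧ IsClosed L' := by
    intro d
    induction d with
    | zero =>
      intro L hT hcl hne hle
      have hsub : L.toFinset ⊆ S := fun w hw => hT.2.1 w (List.mem_toFinset.1 hw)
      have hcard : S.card ≤ L.toFinset.card := by
        rw [List.toFinset_card_of_nodup hT.1]; omega
      exact ⟨L, hne, hT.1, (Finset.eq_of_subset_of_card_le hsub hcard), hT.2.2, hcl⟩
    | succ d ih =>
      intro L hT hcl hne hle
      by_cases hfin : L.toFinset = S
      · exact ⟨L, hne, hT.1, hfin, hT.2.2, hcl⟩
      · obtain ⟨L', hT', hcl', hne', hlen'⟩ := grow L hT hcl hne hfin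
        apply ih L' hT' hcl' hne'
        omega
  exact main S.card M₀ hM₀T hM₀cl hM₀ne (by omega)

-- from test5.lean
theorem ucycle_of_euler (hn : 1 ≤ n) (S : Finset (Fin n → A))
    (L : List (Fin n → A)) (hne : L ≠ []) (hnd : L.Nodup) (hfin : L.toFinset = S)
    (hch : L.Chain' stp) (hcl : IsClosed L) : HasUCycle S := by
  classical
  have hm : L.length = S.card := by rw [← hfin, List.toFinset_card_of_nodup hnd]
  have hpos : 0 < S.card := by
    rw [← hm]; exact List.length_pos_iff.2 hne
  haveI : NeZero S.card := ⟨by omega⟩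
  -- cyclic successor property
  have csucc : ∀ p (h1 : p < L.length),
      stp (L.get ⟨p, h1⟩) (L.get ⟨(p+1) % L.length, Nat.mod_lt _ (by omega)⟩) := by
    intro p h1
    rcases lt_or_eq_of_le (Nat.succ_le_of_lt h1) with h2 | h2
    · have := List.isChain_iff_getElem.1 hch p (by omega)
      simpa [Nat.mod_eq_of_lt h2] using this
    · have hp : p = L.length - 1 := by omega
      subst hp
      have hmod : (L.length - 1 + 1) % L.length = 0 := by
        have : L.length - 1 + 1 = L.length := by omega
        rw [this, Nat.mod_self]
      have hlast : L.getLast hne = L.get ⟨L.length - 1, h1⟩ := List.getLast_eq_getElem _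
      have hhead : L.head hne
          = L.get ⟨(L.length - 1 + 1) % L.length, Nat.mod_lt _ (by omega)⟩ := by
        rw [← List.get_mk_zero (by omega : 0 < L.length)]
        congr 1
        exact Fin.ext (by simpa using hmod.symm)
      rw [← hlast, ← hhead]
      exact hcl hne
  set m := S.card with hmdef
  have hval : ∀ i : ZMod m, (i.val : ℕ) < L.length := by
    intro i; rw [hm]; exact ZMod.val_lt i
  set F : ZMod m → (Fin n → A) := fun i => L.get ⟨i.val, hval i⟩ with hF
  set c : ZMod m → A := fun i => F i ⟨0, by omega⟩ with hc
  have hstep : ∀ i : ZMod m, stp (F i) (F (i + 1)) := by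
    intro i
    have h1 : (i + 1).val = (i.val + 1) % m := by
      rw [ZMod.val_add, ZMod.val_one_eq_one_mod]
      conv_rhs => rw [Nat.add_mod]
      conv_lhs => rw [Nat.add_mod, Nat.mod_mod_of_dvd _ dvd_rfl]
    have hstep' := csucc i.val (hval i)
    have hidx : ((i+1).val : ℕ) = (i.val + 1) % L.length := by rw [hm]; exact h1
    simp only [hF]
    convert hstep' using 2
    exact Fin.ext (by simpa using hidx)
  -- window lemma
  have key : ∀ t : ℕ, ∀ ht : t < n, ∀ i : ZMod m, c (i + (t : ZMod m)) = F i ⟨t, ht⟩ := by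
    intro t
    induction t with
    | zero =>
      intro ht i
      rw [Nat.cast_zero, add_zero]
    | succ t ih =>
      intro ht i
      have e1 : i + ((t+1 : ℕ) : ZMod m) = (i + 1) + (t : ZMod m) := by
        push_cast; ring
      rw [e1, ih (by omega) (i+1)]
      have := hstep i
      rw [stp] at this
      have h2 : hd (F (i+1)) ⟨t, by omega⟩ = tl (F i) ⟨t, by omega⟩ := by rw [this]
      simp only [hd, tl] at h2
      exact h2
  refine ⟨c, ?_⟩
  have hwin : (fun i : ZMod m => fun j : Fin n => c (i + (j.val : ZMod m))) = F := by
    funext i j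
    exact (key j.val j.isLt i).trans (by congr 1)
  rw [hwin]
  refine ⟨fun i _ => ?_, fun i _ i' _ hii => ?_, fun w hw => ?_⟩
  · -- maps to
    have : F i ∈ L := List.get_mem _ _
    rw [← hfin]
    exact Finset.mem_coe.2 (List.mem_toFinset.2 this)
  · -- injective
    have := (List.Nodup.get_inj_iff hnd).1 hii
    have hv : (ZMod.val i) = ZMod.val i' := by
      simpa using congrArg Fin.val this
    exact ZMod.val_injective _ hv
  · -- surjective
    rw [Finset.mem_coe, ← hfin, List.mem_toFinset] at hw
    obtain ⟨p, hp⟩ := List.mem_iff_get.1 hw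
    refine ⟨(p.val : ZMod m), Set.mem_univ _, ?_⟩
    have hpv : ((p.val : ZMod m)).val = p.val := by
      rw [ZMod.val_natCast_of_lt]; omega
    simp only [hF]
    rw [← hp]
    congr 1
    ext
    simp [hpv]

-- from test6.lean
lemma sign_facts (x : ℤ) :
    (x.sign = 1 ∧ 1 ≤ x) ∨ (x.sign = 0 ∧ x = 0) ∨ (x.sign = -1 ∧ x ≤ -1) := by
  rcases lt_trichotomy x 0 with h | h | h
  · right; right; exact ⟨Int.sign_eq_neg_one_of_neg h, by omega⟩
  · right; left; exact ⟨by rw [h]; rfl, h⟩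
  · left; exact ⟨Int.sign_eq_one_of_pos h, by omega⟩

lemma l1_dec (a b c d e f : ℤ) (h2 : |d| + |e| + |f| ≤ 2)
    (hphi : a.sign * d + b.sign * e + c.sign * f ≤ -1) :
    |a + d| + |b + e| + |c + f| ≤ |a| + |b| + |c| := by
  rcases sign_facts a with ⟨ha, ha'⟩ | ⟨ha, ha'⟩ | ⟨ha, ha'⟩ <;>
    rcases sign_facts b with ⟨hb, hb'⟩ | ⟨hb, hb'⟩ | ⟨hb, hb'⟩ <;>
    rcases sign_facts c with ⟨hc, hc'⟩ | ⟨hc, hc'⟩ | ⟨hc, hc'⟩ <;>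
    rw [ha, hb, hc] at hphi <;>
    simp only [one_mul, zero_mul, neg_one_mul, Int.abs_eq_natAbs] at * <;>
    omega

lemma phi_abs_le (a b c x y z : ℤ) :
    |a.sign * x + b.sign * y + c.sign * z| ≤ |x| + |y| + |z| := by
  rcases sign_facts a with ⟨ha, _⟩ | ⟨ha, _⟩ | ⟨ha, _⟩ <;>
    rcases sign_facts b with ⟨hb, _⟩ | ⟨hb, _⟩ | ⟨hb, _⟩ <;>
    rcases sign_facts c with ⟨hc, _⟩ | ⟨hc, _⟩ | ⟨hc, _⟩ <;>
    rw [ha, hb, hc] <;>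
    simp only [one_mul, zero_mul, neg_one_mul, Int.abs_eq_natAbs] at * <;>
    omega

lemma sign_mul_self (a : ℤ) : a.sign * a = |a| := by
  rcases sign_facts a with ⟨ha, ha'⟩ | ⟨ha, ha'⟩ | ⟨ha, ha'⟩ <;>
    rw [ha] <;> simp only [one_mul, zero_mul, neg_one_mul, Int.abs_eq_natAbs] <;> omega

lemma l1_unit {v : ℤ × ℤ × ℤ} (hv : v ∈ stepSet3) : l1 v = 1 := by
  fin_cases hv <;> norm_num [l1]

lemma l1_add_le (u v : ℤ × ℤ × ℤ) : l1 (u + v) ≤ l1 u + l1 v := by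
  simp only [l1, Prod.fst_add, Prod.snd_add]
  have h1 := abs_add_le u.1 v.1
  have h2 := abs_add_le u.2.1 v.2.1
  have h3 := abs_add_le u.2.2 v.2.2
  omega

lemma l1_diff_le (x y : ↥stepSet3) : l1 ((y : ℤ × ℤ × ℤ) - x) ≤ 2 := by
  have h1 : ((y : ℤ × ℤ × ℤ) - x) = (y : ℤ × ℤ × ℤ) + (-(x : ℤ × ℤ × ℤ)) := by ring
  rw [h1]
  have := l1_add_le (y : ℤ × ℤ × ℤ) (-(x : ℤ × ℤ × ℤ))
  have h2 : l1 (-(x : ℤ × ℤ × ℤ)) = l1 (x : ℤ × ℤ × ℤ) := by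
    simp [l1, abs_neg]
  rw [h2, l1_unit x.2, l1_unit y.2] at this
  omega

/-- key combinatorial step: some mismatched letter can be fixed staying within distance k -/

lemma exists_fix {n : ℕ} (k : ℕ) (hk : 3 ≤ k) (w w₀ : Fin n → ↥stepSet3)
    (hs : l1 (∑ i, (w i : ℤ × ℤ × ℤ)) ≤ (k : ℤ))
    (hs₀ : l1 (∑ i, (w₀ i : ℤ × ℤ × ℤ)) ≤ 1)
    (hne : w ≠ w₀) :
    ∃ i, w i ≠ w₀ i ∧
      l1 ((∑ j, (w j : ℤ × ℤ × ℤ)) + ((w₀ i : ℤ × ℤ × ℤ) - (w i : ℤ × ℤ × ℤ))) ≤ (k : ℤ) := by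
  classical
  set s := ∑ i, (w i : ℤ × ℤ × ℤ) with hsdef
  set s₀ := ∑ i, (w₀ i : ℤ × ℤ × ℤ) with hs₀def
  set D := Finset.univ.filter (fun i => w i ≠ w₀ i) with hD
  have hDne : D.Nonempty := by
    by_contra hcon
    rw [Finset.not_nonempty_iff_eq_empty] at hcon
    apply hne
    funext i
    by_contra hi
    have : i ∈ D := Finset.mem_filter.2 ⟨Finset.mem_univ i, hi⟩
    rw [hcon] at this
    exact absurd this (Finset.notMem_empty i)
  set δ : Fin n → ℤ × ℤ × ℤ := fun i => (w₀ i : ℤ × ℤ × ℤ) - (w i : ℤ × ℤ × ℤ) with hδ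
  have hsum : ∑ i ∈ D, δ i = s₀ - s := by
    have h1 : ∑ i, δ i = s₀ - s := by
      rw [hδ, hsdef, hs₀def, Finset.sum_sub_distrib]
    rw [← h1]
    apply Finset.sum_subset (Finset.filter_subset _ _)
    intro i _ hiD
    have : w i = w₀ i := by
      by_contra hi
      exact hiD (Finset.mem_filter.2 ⟨Finset.mem_univ i, hi⟩)
    simp [hδ, this]
  by_cases hcase : l1 s + 2 ≤ (k : ℤ)
  · obtain ⟨i, hi⟩ := hDne
    rw [hD, Finset.mem_filter] at hi
    refine ⟨i, hi.2, ?_⟩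
    show l1 (s + δ i) ≤ (k : ℤ)
    have h1 := l1_add_le s (δ i)
    have h2 : l1 (δ i) ≤ 2 := l1_diff_le (w i) (w₀ i)
    omega
  · push_neg at hcase
    have h2 : 2 ≤ l1 s := by omega
    have hφs : s.1.sign * s.1 + s.2.1.sign * s.2.1 + s.2.2.sign * s.2.2 = l1 s := by
      rw [sign_mul_self, sign_mul_self, sign_mul_self]; rfl
    have hφ₀ : |s.1.sign * s₀.1 + s.2.1.sign * s₀.2.1 + s.2.2.sign * s₀.2.2| ≤ 1 := by
      have ha := phi_abs_le s.1 s.2.1 s.2.2 s₀.1 s₀.2.1 s₀.2.2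
      have hb : l1 s₀ = |s₀.1| + |s₀.2.1| + |s₀.2.2| := rfl
      omega
    have hφ₀' : s.1.sign * s₀.1 + s.2.1.sign * s₀.2.1 + s.2.2.sign * s₀.2.2 ≤ 1 :=
      le_trans (le_abs_self _) hφ₀
    have hφsum : ∑ i ∈ D, (s.1.sign * (δ i).1 + s.2.1.sign * (δ i).2.1 + s.2.2.sign * (δ i).2.2)
        = s.1.sign * (s₀ - s).1 + s.2.1.sign * (s₀ - s).2.1 + s.2.2.sign * (s₀ - s).2.2 := by
      rw [← hsum]
      rw [Finset.sum_add_distrib, Finset.sum_add_distrib, ← Finset.mul_sum, ← Finset.mul_sum,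
        ← Finset.mul_sum, ← Prod.fst_sum, ← Prod.snd_sum, ← Prod.fst_sum, ← Prod.snd_sum]
    have hneg : ∑ i ∈ D, (s.1.sign * (δ i).1 + s.2.1.sign * (δ i).2.1 + s.2.2.sign * (δ i).2.2) < 0 := by
      rw [hφsum]
      have he : s.1.sign * (s₀ - s).1 + s.2.1.sign * (s₀ - s).2.1 + s.2.2.sign * (s₀ - s).2.2
          = (s.1.sign * s₀.1 + s.2.1.sign * s₀.2.1 + s.2.2.sign * s₀.2.2) - (s.1.sign * s.1 + s.2.1.sign * s.2.1 + s.2.2.sign * s.2.2) := by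
        simp only [Prod.fst_sub, Prod.snd_sub]
        ring
      rw [he, hφs]
      omega
    have hex : ∃ i ∈ D, (s.1.sign * (δ i).1 + s.2.1.sign * (δ i).2.1 + s.2.2.sign * (δ i).2.2) < 0 := by
      by_contra hcon
      push_neg at hcon
      have : (0 : ℤ) ≤ ∑ i ∈ D, (s.1.sign * (δ i).1 + s.2.1.sign * (δ i).2.1 + s.2.2.sign * (δ i).2.2) :=
        Finset.sum_nonneg hcon
      omega
    obtain ⟨i, hiD, hφi⟩ := hex
    rw [hD, Finset.mem_filter] at hiD
    refine ⟨i, hiD.2, ?_⟩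
    show l1 (s + δ i) ≤ (k : ℤ)
    have hδ2 : |(δ i).1| + |(δ i).2.1| + |(δ i).2.2| ≤ 2 := l1_diff_le (w i) (w₀ i)
    have := l1_dec s.1 s.2.1 s.2.2 (δ i).1 (δ i).2.1 (δ i).2.2 hδ2 (by omega)
    have hsl : l1 (s + δ i) = |s.1 + (δ i).1| + |s.2.1 + (δ i).2.1| + |s.2.2 + (δ i).2.2| := rfl
    have hl1s : l1 s = |s.1| + |s.2.1| + |s.2.2| := rfl
    omega

-- from test7.lean
/-- the word obtained from `w` after `t` shift-steps towards the word `u` -/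

def mix (w u : Fin n → A) (t : ℕ) : Fin n → A := fun j =>
  if h : j.val + t < n then w ⟨j.val + t, h⟩
  else u ⟨(j.val + t - n) % n, Nat.mod_lt _ (by omega)⟩

lemma mix_zero (w u : Fin n → A) : mix w u 0 = w := by
  funext j
  simp only [mix, Nat.add_zero, j.isLt, dif_pos, Fin.eta]

lemma mix_n (w u : Fin n → A) : mix w u n = u := by
  funext j
  have h1 : ¬ (j.val + n < n) := by omega
  simp only [mix, h1, dif_neg, not_false_iff]
  congr 1
  ext
  show (j.val + n - n) % n = j.val
  rw [Nat.add_sub_cancel, Nat.mod_eq_of_lt j.isLt]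

lemma stp_mix (w u : Fin n → A) (t : ℕ) (ht : t < n) : stp (mix w u t) (mix w u (t+1)) := by
  funext j
  show mix w u t ⟨j.val + 1, by omega⟩ = mix w u (t+1) ⟨j.val, by omega⟩
  have e : j.val + 1 + t = j.val + (t + 1) := by omega
  simp only [mix, e]

/-- ℕ-indexed letter values -/

def vv (w : Fin n → ↥stepSet3) (p : ℕ) : ℤ × ℤ × ℤ :=
  if h : p < n then ((w ⟨p, h⟩ : ℤ × ℤ × ℤ)) else 0

lemma sum_word (w : Fin n → ↥stepSet3) :
    ∑ j, ((w j : ℤ × ℤ × ℤ)) = ∑ p ∈ Finset.range n, vv w p := by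
  rw [← Fin.sum_univ_eq_sum_range (fun p => vv w p) n]
  apply Finset.sum_congr rfl
  intro j _
  simp only [vv, j.isLt, dif_pos, Fin.eta]

lemma sum_mix (w u : Fin n → ↥stepSet3) (t : ℕ) (ht : t ≤ n) :
    ∑ p ∈ Finset.range n, vv (mix w u t) p
      = (∑ p ∈ Finset.range n, vv w p) - (∑ p ∈ Finset.range t, vv w p)
        + (∑ p ∈ Finset.range t, vv u p) := by
  have E1 : ∑ p ∈ Finset.range n, vv (mix w u t) p
      = (∑ p ∈ Finset.range (n-t), vv (mix w u t) p)
        + (∑ p ∈ Finset.Ico (n-t) n, vv (mix w u t) p) := by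
    rw [Finset.range_eq_Ico, ← Finset.sum_Ico_consecutive _ (Nat.zero_le (n-t)) (by omega),
      ← Finset.range_eq_Ico]
  have E2 : ∑ p ∈ Finset.range (n-t), vv (mix w u t) p = ∑ p ∈ Finset.Ico t n, vv w p := by
    rw [Finset.sum_Ico_eq_sum_range]
    apply Finset.sum_congr rfl
    intro p hp
    rw [Finset.mem_range] at hp
    have h1 : p < n := by omega
    have h2 : p + t < n := by omega
    have e : t + p = p + t := by omega
    simp only [vv, mix, dif_pos h1, e, dif_pos h2]
  have E3 : ∑ p ∈ Finset.Ico (n-t) n, vv (mix w u t) p = ∑ p ∈ Finset.range t, vv u p := by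
    rw [Finset.sum_Ico_eq_sum_range]
    have hn : n - (n - t) = t := by omega
    rw [hn]
    apply Finset.sum_congr rfl
    intro p hp
    rw [Finset.mem_range] at hp
    have h1 : n - t + p < n := by omega
    have h2 : ¬ (n - t + p + t < n) := by omega
    have e1 : n - t + p + t - n = p := by omega
    simp only [vv, mix, dif_pos h1, dif_neg h2, e1,
      Nat.mod_eq_of_lt (show p < n by omega), dif_pos (show p < n by omega)]
  have E4 : ∑ p ∈ Finset.range n, vv w p
      = (∑ p ∈ Finset.range t, vv w p) + (∑ p ∈ Finset.Ico t n, vv w p) := by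
    rw [Finset.range_eq_Ico, ← Finset.sum_Ico_consecutive _ (Nat.zero_le t) (by omega : t ≤ n),
      ← Finset.range_eq_Ico]
  rw [E1, E2, E3, E4]
  abel

-- from test8.lean




lemma reach_mix (k : ℕ) (S : Finset (Fin n → ↥stepSet3))
    (hmem : ∀ v : Fin n → ↥stepSet3, v ∈ S ↔ l1 (∑ j, (v j : ℤ × ℤ × ℤ)) ≤ (k : ℤ))
    (w u : Fin n → ↥stepSet3) (hw : w ∈ S)
    (hall : ∀ t, t ≤ n → l1 (∑ p ∈ Finset.range n, vv (mix w u t) p) ≤ (k : ℤ)) :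
    Relation.ReflTransGen (fun a b => stp a b ∧ b ∈ S) w u := by
  have key : ∀ t, t ≤ n →
      Relation.ReflTransGen (fun a b => stp a b ∧ b ∈ S) w (mix w u t) := by
    intro t
    induction t with
    | zero => intro _; rw [mix_zero]
    | succ t ih =>
      intro h
      refine Relation.ReflTransGen.tail (ih (by omega)) ⟨stp_mix w u t (by omega), ?_⟩
      rw [hmem, sum_word]
      exact hall (t+1) h
  have := key n le_rfl
  rwa [mix_n] at this

lemma sum_update (w : Fin n → ↥stepSet3) (i : Fin n) (y : ↥stepSet3) (t : ℕ) (htn : t ≤ n) :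
    ∑ p ∈ Finset.range t, vv (Function.update w i y) p
      = (∑ p ∈ Finset.range t, vv w p)
        + (if i.val < t then ((y : ℤ × ℤ × ℤ) - (w i : ℤ × ℤ × ℤ)) else 0) := by
  have hterm : ∀ p, vv (Function.update w i y) p
      = vv w p + (if p = i.val then ((y : ℤ × ℤ × ℤ) - (w i : ℤ × ℤ × ℤ)) else 0) := by
    intro p
    by_cases hp : p < n
    · by_cases hpi : p = i.val
      · have hfe : (⟨p, hp⟩ : Fin n) = i := Fin.ext hpi
        simp only [vv, dif_pos hp, if_pos hpi]
        rw [hfe, Function.update_self]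
        ring
      · have hfe : (⟨p, hp⟩ : Fin n) ≠ i := fun h => hpi (congrArg Fin.val h)
        simp only [vv, dif_pos hp, Function.update_of_ne hfe, if_neg hpi]
        ring
    · have hpi : p ≠ i.val := by have := i.isLt; omega
      simp only [vv, dif_neg hp, if_neg hpi]
      ring
  rw [Finset.sum_congr rfl (fun p _ => hterm p), Finset.sum_add_distrib]
  congr 1
  rw [Finset.sum_ite_eq' (Finset.range t) i.val
    (fun _ => ((y : ℤ × ℤ × ℤ) - (w i : ℤ × ℤ × ℤ)))]
  simp [Finset.mem_range]

lemma reach_update (k : ℕ) (S : Finset (Fin n → ↥stepSet3))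
    (hmem : ∀ v : Fin n → ↥stepSet3, v ∈ S ↔ l1 (∑ j, (v j : ℤ × ℤ × ℤ)) ≤ (k : ℤ))
    (w : Fin n → ↥stepSet3) (hw : w ∈ S) (i : Fin n) (y : ↥stepSet3)
    (hy : l1 ((∑ j, (w j : ℤ × ℤ × ℤ)) + ((y : ℤ × ℤ × ℤ) - (w i : ℤ × ℤ × ℤ))) ≤ (k : ℤ)) :
    Relation.ReflTransGen (fun a b => stp a b ∧ b ∈ S) w (Function.update w i y) := by
  apply reach_mix k S hmem w _ hw
  intro t ht
  rw [sum_mix _ _ _ ht, sum_update w i y t ht]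
  have hsw := (hmem w).1 hw
  rw [sum_word] at hsw hy
  by_cases hit : i.val < t
  · rw [if_pos hit]
    have : (∑ p ∈ Finset.range n, vv w p) - (∑ p ∈ Finset.range t, vv w p)
        + ((∑ p ∈ Finset.range t, vv w p) + ((y : ℤ × ℤ × ℤ) - (w i : ℤ × ℤ × ℤ)))
        = (∑ p ∈ Finset.range n, vv w p) + ((y : ℤ × ℤ × ℤ) - (w i : ℤ × ℤ × ℤ)) := by abel
    rw [this]
    exact hy
  · rw [if_neg hit]
    have : (∑ p ∈ Finset.range n, vv w p) - (∑ p ∈ Finset.range t, vv w p)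
        + ((∑ p ∈ Finset.range t, vv w p) + 0) = ∑ p ∈ Finset.range n, vv w p := by abel
    rw [this]
    exact hsw

lemma conn (k : ℕ) (hk : 3 ≤ k) (S : Finset (Fin n → ↥stepSet3))
    (hmem : ∀ v : Fin n → ↥stepSet3, v ∈ S ↔ l1 (∑ j, (v j : ℤ × ℤ × ℤ)) ≤ (k : ℤ))
    (w₀ : Fin n → ↥stepSet3) (hw₀ : l1 (∑ j, (w₀ j : ℤ × ℤ × ℤ)) ≤ 1) :
    ∀ w ∈ S, Relation.ReflTransGen (fun a b => stp a b ∧ b ∈ S) w w₀ := by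
  classical
  have main : ∀ m : ℕ, ∀ w ∈ S,
      (Finset.univ.filter (fun i => w i ≠ w₀ i)).card ≤ m →
      Relation.ReflTransGen (fun a b => stp a b ∧ b ∈ S) w w₀ := by
    intro m
    induction m with
    | zero =>
      intro w _ hc
      have : w = w₀ := by
        funext i
        by_contra hi
        have : i ∈ Finset.univ.filter (fun i => w i ≠ w₀ i) :=
          Finset.mem_filter.2 ⟨Finset.mem_univ i, hi⟩
        have := Finset.card_pos.2 ⟨i, this⟩
        omega
      rw [this]
    | succ m ih =>
      intro w hwS hc
      by_cases hne : w = w₀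
      · rw [hne]
      · obtain ⟨i, hi, hbound⟩ := exists_fix k hk w w₀ ((hmem w).1 hwS) hw₀ hne
        set w' := Function.update w i (w₀ i) with hw'
        have hw'S : w' ∈ S := by
          rw [hmem]
          have hsum : ∑ j, ((w' j : ℤ × ℤ × ℤ))
              = (∑ j, (w j : ℤ × ℤ × ℤ)) + ((w₀ i : ℤ × ℤ × ℤ) - (w i : ℤ × ℤ × ℤ)) := by
            have h1 : ∀ j, ((w' j : ℤ × ℤ × ℤ))
                = Function.update (fun j => ((w j : ℤ × ℤ × ℤ))) i ((w₀ i : ℤ × ℤ × ℤ)) j := by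
              intro j
              by_cases hj : j = i
              · subst hj; simp [hw']
              · simp [hw', Function.update_of_ne hj]
            rw [Finset.sum_congr rfl (fun j _ => h1 j),
              Finset.sum_update_of_mem (Finset.mem_univ i)]
            rw [Finset.sum_eq_add_sum_sdiff_singleton_of_mem (Finset.mem_univ i)
              (fun j => ((w j : ℤ × ℤ × ℤ)))]
            abel
          rw [hsum]
          exact hbound
        have hreach1 : Relation.ReflTransGen (fun a b => stp a b ∧ b ∈ S) w w' :=
          reach_update k S hmem w hwS i (w₀ i) hbound
        have hcard : (Finset.univ.filter (fun j => w' j ≠ w₀ j)).card ≤ m := by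
          have hsub : Finset.univ.filter (fun j => w' j ≠ w₀ j)
              ⊆ (Finset.univ.filter (fun j => w j ≠ w₀ j)).erase i := by
            intro j hj
            rw [Finset.mem_filter] at hj
            have hji : j ≠ i := by
              intro h
              subst h
              exact hj.2 (by simp [hw'])
            refine Finset.mem_erase.2 ⟨hji, Finset.mem_filter.2 ⟨Finset.mem_univ j, ?_⟩⟩
            have : w' j = w j := by simp [hw', Function.update_of_ne hji]
            rw [← this]
            exact hj.2
          have hiD : i ∈ Finset.univ.filter (fun j => w j ≠ w₀ j) :=
            Finset.mem_filter.2 ⟨Finset.mem_univ i, hi⟩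
          have := Finset.card_le_card hsub
          rw [Finset.card_erase_of_mem hiD] at this
          have := Finset.card_pos.2 ⟨i, hiD⟩
          omega
        exact hreach1.trans (ih w' hw'S hcard)
  intro w hw
  exact main (Finset.univ.filter (fun i => w i ≠ w₀ i)).card w hw le_rfl

def w0 (n : ℕ) : Fin n → ↥stepSet3 := fun i =>
  if i.val % 2 = 0 then ⟨(1,0,0), by decide⟩ else ⟨(-1,0,0), by decide⟩

lemma sum_w0 (n : ℕ) : ∑ j, ((w0 n j : ℤ × ℤ × ℤ)) = (((n % 2 : ℕ) : ℤ), 0, 0) := by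
  induction n with
  | zero => simp; rfl
  | succ n ih =>
    rw [Fin.sum_univ_castSucc]
    have h1 : ∀ j : Fin n, ((w0 (n+1) j.castSucc : ℤ × ℤ × ℤ)) = ((w0 n j : ℤ × ℤ × ℤ)) := by
      intro j
      simp [w0, Fin.coe_castSucc]
    rw [Finset.sum_congr rfl (fun j _ => h1 j), ih]
    have h2 : ((w0 (n+1) (Fin.last n) : ℤ × ℤ × ℤ))
        = if n % 2 = 0 then ((1,0,0) : ℤ × ℤ × ℤ) else (-1,0,0) := by
      simp only [w0, Fin.val_last]
      split_ifs <;> rfl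
    rw [h2]
    by_cases hpar : n % 2 = 0
    · rw [if_pos hpar]
      have : (n+1) % 2 = 1 := by omega
      rw [hpar, this]
      norm_num
    · rw [if_neg hpar]
      have h3 : n % 2 = 1 := by omega
      have h4 : (n+1) % 2 = 0 := by omega
      rw [h3, h4]
      norm_num

lemma l1_sum_w0 (n : ℕ) : l1 (∑ j, ((w0 n j : ℤ × ℤ × ℤ))) ≤ 1 := by
  rw [sum_w0]
  have h : ((n % 2 : ℕ) : ℤ) = 0 ∨ ((n % 2 : ℕ) : ℤ) = 1 := by omega
  rcases h with h | h <;> rw [h] <;> norm_num [l1]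

-- from test9.lean
lemma bal (k : ℕ) (hn : 2 ≤ n) (S : Finset (Fin n → ↥stepSet3))
    (hmem : ∀ v : Fin n → ↥stepSet3, v ∈ S ↔ l1 (∑ j, (v j : ℤ × ℤ × ℤ)) ≤ (k : ℤ))
    (v : Fin (n-1) → ↥stepSet3) :
    (S.filter (fun w => hd w = v)).card = (S.filter (fun w => tl w = v)).card := by
  classical
  obtain ⟨m, rfl⟩ : ∃ m, n = m + 1 := ⟨n - 1, by omega⟩
  set e := finRotate (m+1) with he
  have key : ∀ (a : ℕ) (h : a < m), e ⟨a, by omega⟩ = ⟨a + 1, by omega⟩ := by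
    intro a h
    rw [he, finRotate_succ_apply]
    apply Fin.ext
    rw [Fin.val_add_one_of_lt]
    · exact Fin.lt_def.2 (by simp [Fin.val_last]; omega)
  set φ : (Fin (m+1) → ↥stepSet3) → (Fin (m+1) → ↥stepSet3) := fun w => w ∘ e.symm with hφ
  set ψ : (Fin (m+1) → ↥stepSet3) → (Fin (m+1) → ↥stepSet3) := fun w => w ∘ e with hψ
  have htlφ : ∀ w, tl (φ w) = hd w := by
    intro w
    funext j
    show w (e.symm ⟨j.val + 1, by omega⟩) = w ⟨j.val, by omega⟩
    congr 1
    rw [Equiv.symm_apply_eq]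
    exact (key j.val (by omega)).symm
  have hhdψ : ∀ w, hd (ψ w) = tl w := by
    intro w
    funext j
    show w (e ⟨j.val, by omega⟩) = w ⟨j.val + 1, by omega⟩
    congr 1
    exact key j.val (by omega)
  have hsumφ : ∀ w : Fin (m+1) → ↥stepSet3,
      ∑ j, ((φ w j : ℤ × ℤ × ℤ)) = ∑ j, ((w j : ℤ × ℤ × ℤ)) :=
    fun w => Equiv.sum_comp e.symm (fun j => ((w j : ℤ × ℤ × ℤ)))
  have hsumψ : ∀ w : Fin (m+1) → ↥stepSet3,
      ∑ j, ((ψ w j : ℤ × ℤ × ℤ)) = ∑ j, ((w j : ℤ × ℤ × ℤ)) :=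
    fun w => Equiv.sum_comp e (fun j => ((w j : ℤ × ℤ × ℤ)))
  apply Finset.card_bij' (fun w _ => φ w) (fun w _ => ψ w)
  · intro w hw
    rw [Finset.mem_filter] at hw ⊢
    refine ⟨(hmem _).2 (by rw [hsumφ]; exact (hmem _).1 hw.1), ?_⟩
    rw [htlφ]
    exact hw.2
  · intro w hw
    rw [Finset.mem_filter] at hw ⊢
    refine ⟨(hmem _).2 (by rw [hsumψ]; exact (hmem _).1 hw.1), ?_⟩
    rw [hhdψ]
    exact hw.2
  · intro w _
    funext j
    show w (e.symm (e j)) = w j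
    rw [Equiv.symm_apply_apply]
  · intro w _
    funext j
    show w (e (e.symm j)) = w j
    rw [Equiv.apply_symm_apply]
end UCycleProof

theorem ucycle_lattice_paths_3d (n k : ℕ) (hk : 4 ≤ k + 1) (hn : k + 1 ≤ n) :
    HasUCycle (wordsOf (fun w : Fin n → ↥stepSet3 =>
      l1 (∑ i, (w i : ℤ × ℤ × ℤ)) ≤ (k : ℤ))) := by
  classical
  have hk3 : 3 ≤ k := by omega
  have hn1 : 1 ≤ n := by omega
  have hn2 : 2 ≤ n := by omega
  set S := wordsOf (fun w : Fin n → ↥stepSet3 =>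
    l1 (∑ i, (w i : ℤ × ℤ × ℤ)) ≤ (k : ℤ)) with hSdef
  have hmem : ∀ v : Fin n → ↥stepSet3,
      v ∈ S ↔ l1 (∑ j, (v j : ℤ × ℤ × ℤ)) ≤ (k : ℤ) := by
    intro v
    rw [hSdef]
    unfold wordsOf
    simp
  have hw0S : UCycleProof.w0 n ∈ S := by
    rw [hmem]
    have := UCycleProof.l1_sum_w0 n
    have hk1 : (1 : ℤ) ≤ (k : ℤ) := by exact_mod_cast Nat.one_le_iff_ne_zero.2 (by omega)
    omega
  have hSne : S.Nonempty := ⟨UCycleProof.w0 n, hw0S⟩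
  obtain ⟨L, hne, hnd, hfin, hch, hcl⟩ :=
    UCycleProof.euler S hSne (fun v => UCycleProof.bal k hn2 S hmem v)
      (UCycleProof.w0 n) hw0S
      (UCycleProof.conn k hk3 S hmem (UCycleProof.w0 n) (UCycleProof.l1_sum_w0 n))
  exact UCycleProof.ucycle_of_euler hn1 S L hne hnd hfin hch hcl
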